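/- The number of permutations of [3n] that avoid the patterns 231, 312 and 321 and satisfy π(3i+1) < π(3i+2) and π(3i+1) < π(3i+3) for all 0 ≤ i ≤ n-1 equals 2 · 3^{n-1}. -/

import Mathlib

/-- `π` contains the pattern `p` (given 0-based, as a function `Fin m → Fin m`)
iff some subsequence of `π` is order-isomorphic to `p`. -/
def ContainsPat {m n : ℕ} (p : Fin m → Fin m) (π : Equiv.Perm (Fin n)) : Prop :=
  ∃ f : Fin m → Fin n, StrictMono f ∧ ∀ a b : Fin m, p a < p b ↔ π (f a) < π (f b)

/-- 2-ary shrub forests of `n` heaps avoiding 231, 312, 321: permutations of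
`[3n]` avoiding the patterns 231, 312, 321 and satisfying (1-based)
`π(3i+1) < π(3i+2)` and `π(3i+1) < π(3i+3)` for all `0 ≤ i ≤ n-1`. -/
def InShrub (n : ℕ) (π : Equiv.Perm (Fin (3 * n))) : Prop :=
  (¬ ContainsPat ![1, 2, 0] π) ∧ (¬ ContainsPat ![2, 0, 1] π) ∧
  (¬ ContainsPat ![2, 1, 0] π) ∧
  ∀ (i : ℕ) (h : 3 * i + 2 < 3 * n),
    π ⟨3 * i, by omega⟩ < π ⟨3 * i + 1, by omega⟩ ∧
    π ⟨3 * i, by omega⟩ < π ⟨3 * i + 2, h⟩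

namespace Shrub5

def Bnd {N : ℕ} (π : Equiv.Perm (Fin N)) : Prop :=
  ∀ j : Fin N, (π j : ℕ) ≤ (j : ℕ) + 1 ∧ (j : ℕ) ≤ (π j : ℕ) + 1

def Dcond (n : ℕ) (π : Equiv.Perm (Fin (3 * n))) : Prop :=
  Bnd π ∧ ∀ (i : ℕ) (h : 3 * i < 3 * n), (π ⟨3 * i, h⟩ : ℕ) ≠ 3 * i + 1



/-- extended choice function -/
def F (c : ℕ → Fin 3) (j : ℕ) : ℕ :=
  if j % 3 = 0 then (if 0 < j ∧ c (j / 3 - 1) = 2 then j - 1 else j)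
  else if j % 3 = 1 then (if c (j / 3) = 1 then j + 1 else j)
  else (if c (j / 3) = 1 then j - 1 else if c (j / 3) = 2 then j + 1 else j)

lemma fin3 (x : Fin 3) : x = 0 ∨ x = 1 ∨ x = 2 := by fin_cases x <;> simp

lemma F_le (c : ℕ → Fin 3) (j : ℕ) : F c j ≤ j + 1 ∧ j ≤ F c j + 1 := by
  unfold F; split_ifs <;> omega

lemma F_invol (c : ℕ → Fin 3) (j : ℕ) : F c (F c j) = j := by
  have h3 : j % 3 = 0 ∨ j % 3 = 1 ∨ j % 3 = 2 := by omega
  rcases h3 with hr | hr | hr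
  · by_cases hc : 0 < j ∧ c (j / 3 - 1) = 2
    · have e0 : F c j = j - 1 := by unfold F; simp [hr, hc]
      have e1 : (j - 1) % 3 = 2 := by omega
      have e2 : (j - 1) / 3 = j / 3 - 1 := by omega
      rw [e0]; unfold F; rw [e2]
      simp [e1, hc.2] <;> omega
    · have e0 : F c j = j := by unfold F; simp [hr, hc]
      rw [e0]; unfold F; simp [hr, hc]
  · by_cases hc : c (j / 3) = 1
    · have e0 : F c j = j + 1 := by unfold F; simp [hr, hc] <;> omega
      have e1 : (j + 1) % 3 = 2 := by omega
      have e2 : (j + 1) / 3 = j / 3 := by omega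
      rw [e0]; unfold F; rw [e2]; simp [e1, hc] <;> omega
    · have e0 : F c j = j := by unfold F; simp [hr, hc]
      rw [e0]; unfold F; simp [hr, hc]
  · rcases fin3 (c (j / 3)) with hc | hc | hc
    · have e0 : F c j = j := by unfold F; simp [hr, hc]
      rw [e0]; unfold F; simp [hr, hc]
    · have e0 : F c j = j - 1 := by unfold F; simp [hr, hc] <;> omega
      have e1 : (j - 1) % 3 = 1 := by omega
      have e2 : (j - 1) / 3 = j / 3 := by omega
      rw [e0]; unfold F; rw [e2]; simp [e1, hc] <;> omega
    · have e0 : F c j = j + 1 := by unfold F; simp [hr, hc] <;> omega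
      have e1 : (j + 1) % 3 = 0 := by omega
      have e2 : (j + 1) / 3 - 1 = j / 3 := by omega
      rw [e0]; unfold F; rw [e2]; simp [e1, hc] <;> omega
  
lemma F_lt {n : ℕ} (hn : 1 ≤ n) (c : ℕ → Fin 3) (hc : c (n - 1) ≠ 2) (j : ℕ)
    (hj : j < 3 * n) : F c j < 3 * n := by
  unfold F
  split_ifs with h1 h2 h3 h4 h5 h6 <;> try omega
  case _ =>
    have : j / 3 ≠ n - 1 := fun e => hc (e ▸ h6)
    omega


variable {n : ℕ}
lemma Bnd.symm {π : Equiv.Perm (Fin n)} (hB : Bnd π) : Bnd π.symm := by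
  intro j
  have hk := hB (π.symm j)
  rw [Equiv.apply_symm_apply] at hk
  omega

lemma swapback (π : Equiv.Perm (Fin n)) (hB : Bnd π) :
    ∀ (j : Fin n), (π j : ℕ) = (j : ℕ) + 1 → ∀ (h1 : (j : ℕ) + 1 < n),
      (π ⟨(j : ℕ) + 1, h1⟩ : ℕ) = j := by
  suffices H : ∀ (m : ℕ) (j : Fin n), (j : ℕ) = m → (π j : ℕ) = (j : ℕ) + 1 →
      ∀ (h1 : (j : ℕ) + 1 < n), (π ⟨(j : ℕ) + 1, h1⟩ : ℕ) = j by
    exact fun j => H j j rfl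
  intro m
  induction m using Nat.strong_induction_on with
  | _ m IH =>
    intro j hjm h h1
    have hk := hB (π.symm j)
    rw [Equiv.apply_symm_apply] at hk
    have hne : (π.symm j : ℕ) ≠ (j : ℕ) := by
      intro e
      have : π.symm j = j := Fin.ext e
      have : π j = j := by
        conv_lhs => rw [← this]
        exact π.apply_symm_apply j
      omega
    rcases Nat.lt_or_ge (π.symm j : ℕ) (j : ℕ) with hlt | hge
    · -- π.symm j = j - 1, derive contradiction via IH
      exfalso
      have hj1 : 1 ≤ (j : ℕ) := by omega
      set j' : Fin n := π.symm j with hj'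
      have hval : (j' : ℕ) = (j : ℕ) - 1 := by omega
      have hπj' : (π j' : ℕ) = (j' : ℕ) + 1 := by
        rw [hj', Equiv.apply_symm_apply]; omega
      have h1' : (j' : ℕ) + 1 < n := by omega
      have := IH (j' : ℕ) (by omega) j' rfl hπj' h1'
      -- : (π ⟨j' + 1, _⟩ : ℕ) = j'
      have hjj : (⟨(j' : ℕ) + 1, h1'⟩ : Fin n) = j := Fin.ext (by simp only [Fin.val_mk]; omega)
      rw [hjj] at this
      omega
    · have : (π.symm j : ℕ) = (j : ℕ) + 1 := by omega
      have he : (⟨(j : ℕ) + 1, h1⟩ : Fin n) = π.symm j := Fin.ext (by simp only [Fin.val_mk]; omega)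
      rw [he, Equiv.apply_symm_apply]

lemma swapfwd (π : Equiv.Perm (Fin n)) (hB : Bnd π) (j : Fin n) (hj1 : 1 ≤ (j : ℕ))
    (h : (π j : ℕ) = (j : ℕ) - 1) :
    (π ⟨(j : ℕ) - 1, by omega⟩ : ℕ) = j := by
  have hs := swapback π.symm hB.symm ⟨(j : ℕ) - 1, by omega⟩
    (by
      have : π.symm ⟨(j : ℕ) - 1, by omega⟩ = j := by
        apply_fun π
        simp only [Equiv.apply_symm_apply]
        exact (Fin.ext h).symm
      rw [this]; simp; omega)
    (by simp; omega)
  -- hs : (π.symm ⟨(j-1)+1, _⟩ : ℕ) = j - 1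
  have he : (⟨((⟨(j : ℕ) - 1, by omega⟩ : Fin n) : ℕ) + 1, by simp; omega⟩ : Fin n) = j :=
    Fin.ext (by simp; omega)
  rw [he] at hs
  -- hs : (π.symm j : ℕ) = j - 1
  have : π.symm j = ⟨(j : ℕ) - 1, by omega⟩ := Fin.ext (by simp [hs])
  rw [← this, Equiv.apply_symm_apply]


lemma sm3 {N : ℕ} {a b c : Fin N} (h1 : a < b) (h2 : b < c) : StrictMono ![a, b, c] := by
  intro x y hxy
  fin_cases x <;> fin_cases y <;> simp_all <;> omega

lemma contains_of_bad {N : ℕ} (π : Equiv.Perm (Fin N)) (j k : Fin N)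
    (h2 : (j : ℕ) + 2 ≤ (k : ℕ)) (hgt : (π k : ℕ) < (π j : ℕ)) :
    ContainsPat ![1, 2, 0] π ∨ ContainsPat ![2, 0, 1] π ∨ ContainsPat ![2, 1, 0] π := by
  have hkN := k.isLt
  set m : Fin N := ⟨(j : ℕ) + 1, by omega⟩ with hm
  have hjm : j < m := by simp [hm, Fin.lt_def]
  have hmk : m < k := by simp [hm, Fin.lt_def]; omega
  have hsm := sm3 hjm hmk
  have d1 : (π j : ℕ) ≠ (π m : ℕ) := by
    intro e
    have := congrArg Fin.val (π.injective (Fin.ext e))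
    simp [hm] at this
  have d2 : (π m : ℕ) ≠ (π k : ℕ) := by
    intro e
    have := congrArg Fin.val (π.injective (Fin.ext e))
    simp [hm] at this
    omega
  rcases lt_trichotomy ((π m : ℕ)) ((π k : ℕ)) with hc | hc | hc
  · -- π m < π k < π j : pattern 2 0 1
    refine Or.inr (Or.inl ⟨![j, m, k], hsm, ?_⟩)
    intro a b
    fin_cases a <;> fin_cases b <;>
      simp only [Fin.isValue, Matrix.cons_val_zero, Matrix.cons_val_one, Matrix.head_cons,
        Matrix.cons_val_two, Matrix.tail_cons, Fin.lt_def] <;>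
      simp <;> omega
  · exact absurd hc d2
  · rcases lt_trichotomy ((π m : ℕ)) ((π j : ℕ)) with hd | hd | hd
    · -- π k < π m < π j : pattern 2 1 0
      refine Or.inr (Or.inr ⟨![j, m, k], hsm, ?_⟩)
      intro a b
      fin_cases a <;> fin_cases b <;>
      simp only [Fin.isValue, Matrix.cons_val_zero, Matrix.cons_val_one, Matrix.head_cons,
        Matrix.cons_val_two, Matrix.tail_cons, Fin.lt_def] <;>
      simp <;> omega
    · exact absurd hd.symm d1
    · -- π k < π j < π m : pattern 1 2 0
      refine Or.inl ⟨![j, m, k], hsm, ?_⟩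
      intro a b
      fin_cases a <;> fin_cases b <;>
      simp only [Fin.isValue, Matrix.cons_val_zero, Matrix.cons_val_one, Matrix.head_cons,
        Matrix.cons_val_two, Matrix.tail_cons, Fin.lt_def] <;>
      simp <;> omega


lemma gap_of_inshrub {π : Equiv.Perm (Fin (3 * n))} (h : InShrub n π) :
    ∀ j k : Fin (3 * n), (j : ℕ) + 2 ≤ (k : ℕ) → (π j : ℕ) < (π k : ℕ) := by
  intro j k hjk
  by_contra hle
  have hne : (π j : ℕ) ≠ (π k : ℕ) := by
    intro e
    have := congrArg Fin.val (π.injective (Fin.ext e))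
    omega
  have hgt : (π k : ℕ) < (π j : ℕ) := by omega
  rcases contains_of_bad π j k hjk hgt with hC | hC | hC
  exacts [h.1 hC, h.2.1 hC, h.2.2.1 hC]

lemma bnd_of_gap {π : Equiv.Perm (Fin (3 * n))}
    (hg : ∀ j k : Fin (3 * n), (j : ℕ) + 2 ≤ (k : ℕ) → (π j : ℕ) < (π k : ℕ)) :
    Bnd π := by
  intro j
  have hjN := j.isLt
  have hπN := (π j).isLt
  constructor
  · by_cases hbig : (j : ℕ) + 2 < 3 * n
    · by_contra hb
      set S : Finset (Fin (3 * n)) := insert j (Finset.Ici (⟨(j : ℕ) + 2, hbig⟩ : Fin (3 * n))) with hS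
      have hcard := Finset.card_le_card_of_injOn (f := fun x => π x) (s := S)
        (t := Finset.Ici (π j))
        (by
          intro x hx
          rw [hS, Finset.mem_coe, Finset.mem_insert] at hx
          rcases hx with rfl | hx
          · exact Finset.mem_Ici.2 le_rfl
          · rw [Finset.mem_Ici, Fin.le_def] at hx
            exact Finset.mem_Ici.2 (le_of_lt (by rw [Fin.lt_def]; exact hg j x (by simpa using hx))))
        (fun a _ b _ e => π.injective e)
      have hnm : j ∉ Finset.Ici (⟨(j : ℕ) + 2, hbig⟩ : Fin (3 * n)) := by
        rw [Finset.mem_Ici, Fin.le_def]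
        simp <;> omega
      rw [hS, Finset.card_insert_of_notMem hnm, Fin.card_Ici, Fin.card_Ici] at hcard
      simp at hcard
      omega
    · omega
  · by_cases hj2 : 2 ≤ (j : ℕ)
    · by_contra hb
      set S : Finset (Fin (3 * n)) := insert j (Finset.Iic (⟨(j : ℕ) - 2, by omega⟩ : Fin (3 * n))) with hS
      have hcard := Finset.card_le_card_of_injOn (f := fun x => π x) (s := S)
        (t := Finset.Iic (π j))
        (by
          intro x hx
          rw [hS, Finset.mem_coe, Finset.mem_insert] at hx
          rcases hx with rfl | hx
          · exact Finset.mem_Iic.2 le_rfl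
          · rw [Finset.mem_Iic, Fin.le_def] at hx
            simp at hx
            exact Finset.mem_Iic.2 (le_of_lt (by rw [Fin.lt_def]; exact hg x j (by omega))))
        (fun a _ b _ e => π.injective e)
      have hnm : j ∉ Finset.Iic (⟨(j : ℕ) - 2, by omega⟩ : Fin (3 * n)) := by
        rw [Finset.mem_Iic, Fin.le_def]
        simp <;> omega
      rw [hS, Finset.card_insert_of_notMem hnm, Fin.card_Iic, Fin.card_Iic] at hcard
      simp at hcard
      omega
    · omega


lemma dcond_of_inshrub {π : Equiv.Perm (Fin (3 * n))} (h : InShrub n π) : Dcond n π := by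
  have hB : Bnd π := bnd_of_gap (gap_of_inshrub h)
  refine ⟨hB, ?_⟩
  intro i hi e
  have h2 : 3 * i + 2 < 3 * n := by omega
  have heap := (h.2.2.2 i h2).1
  rw [Fin.lt_def] at heap
  have h1 : ((⟨3 * i, hi⟩ : Fin (3 * n)) : ℕ) + 1 < 3 * n := by simp; omega
  have hs := swapback π hB ⟨3 * i, hi⟩ (by simpa using e) h1
  -- hs : (π ⟨3*i+1, _⟩ : ℕ) = 3*i
  have he1 : (⟨((⟨3 * i, hi⟩ : Fin (3 * n)) : ℕ) + 1, h1⟩ : Fin (3 * n)) = ⟨3 * i + 1, by omega⟩ := rfl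
  rw [he1] at hs
  have he2 : (⟨3 * i + 1, by omega⟩ : Fin (3 * n)) = ⟨3 * i + 1, by omega⟩ := rfl
  simp at hs
  omega

lemma inshrub_of_dcond {π : Equiv.Perm (Fin (3 * n))} (h : Dcond n π) : InShrub n π := by
  obtain ⟨hB, hD⟩ := h
  have havoid : ∀ p : Fin 3 → Fin 3, p 2 < p 0 → ¬ ContainsPat p π := by
    intro p hp ⟨f, hsm, hiso⟩
    have h01 : f 0 < f 1 := hsm (by decide)
    have h12 : f 1 < f 2 := hsm (by decide)
    rw [Fin.lt_def] at h01 h12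
    have hgap := (hiso 2 0).1 hp
    rw [Fin.lt_def] at hgap
    have b0 := hB (f 0)
    have b2 := hB (f 2)
    omega
  refine ⟨havoid _ (by decide), havoid _ (by decide), havoid _ (by decide), ?_⟩
  intro i h2
  have hval : (π ⟨3 * i, by omega⟩ : ℕ) ≠ 3 * i + 1 := hD i (by omega)
  have b0 := hB ⟨3 * i, by omega⟩
  have b1 := hB ⟨3 * i + 1, by omega⟩
  have b2 := hB ⟨3 * i + 2, h2⟩
  simp only [Fin.val_mk] at b0 b1 b2
  have hne01 : (π ⟨3 * i, by omega⟩ : ℕ) ≠ (π ⟨3 * i + 1, by omega⟩ : ℕ) := by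
    intro e
    have := congrArg Fin.val (π.injective (Fin.ext e))
    simp at this
  have hne02 : (π ⟨3 * i, by omega⟩ : ℕ) ≠ (π ⟨3 * i + 2, h2⟩ : ℕ) := by
    intro e
    have := congrArg Fin.val (π.injective (Fin.ext e))
    simp at this
  constructor <;> rw [Fin.lt_def] <;> omega

def ext (c : Fin n → Fin 3) : ℕ → Fin 3 := fun i => if h : i < n then c ⟨i, h⟩ else 0

lemma ext_lt {c : Fin n → Fin 3} {i : ℕ} (h : i < n) : ext c i = c ⟨i, h⟩ := by
  simp [ext, h]

def Phi (hn : 1 ≤ n) (c : Fin n → Fin 3) (hc : c ⟨n - 1, by omega⟩ ≠ 2) :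
    Equiv.Perm (Fin (3 * n)) :=
  Function.Involutive.toPerm
    (fun j => ⟨F (ext c) j, F_lt hn (ext c) (by rw [ext_lt (by omega)]; exact hc) j j.2⟩)
    (fun j => Fin.ext (by simpa using F_invol (ext c) (j : ℕ)))

lemma Phi_apply (hn : 1 ≤ n) (c : Fin n → Fin 3) (hc : c ⟨n - 1, by omega⟩ ≠ 2)
    (j : Fin (3 * n)) : (Phi hn c hc j : ℕ) = F (ext c) j := rfl

lemma dcond_Phi (hn : 1 ≤ n) (c : Fin n → Fin 3) (hc : c ⟨n - 1, by omega⟩ ≠ 2) :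
    Dcond n (Phi hn c hc) := by
  constructor
  · intro j
    rw [Phi_apply]
    exact F_le (ext c) j
  · intro i hi
    rw [Phi_apply]
    have hr : (3 * i) % 3 = 0 := by omega
    unfold F
    rw [if_pos (by simpa using hr)]
    split_ifs <;> simp <;> omega

def read (π : Equiv.Perm (Fin (3 * n))) : Fin n → Fin 3 := fun i =>
  if (π ⟨3 * (i : ℕ) + 1, by have := i.2; omega⟩ : ℕ) = 3 * (i : ℕ) + 2 then 1
  else if (π ⟨3 * (i : ℕ) + 2, by have := i.2; omega⟩ : ℕ) = 3 * (i : ℕ) + 3 then 2 else 0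

lemma read_eq_one_iff (π : Equiv.Perm (Fin (3 * n))) (i : Fin n) :
    read π i = 1 ↔ (π ⟨3 * (i : ℕ) + 1, by have := i.2; omega⟩ : ℕ) = 3 * (i : ℕ) + 2 := by
  unfold read
  split_ifs with h1 h2 <;> simp_all

lemma read_eq_two_iff (π : Equiv.Perm (Fin (3 * n))) (i : Fin n) :
    read π i = 2 ↔ ((π ⟨3 * (i : ℕ) + 1, by have := i.2; omega⟩ : ℕ) ≠ 3 * (i : ℕ) + 2 ∧
      (π ⟨3 * (i : ℕ) + 2, by have := i.2; omega⟩ : ℕ) = 3 * (i : ℕ) + 3) := by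
  unfold read
  split_ifs with h1 h2 <;> simp_all

lemma read_ne (hn : 1 ≤ n) (π : Equiv.Perm (Fin (3 * n))) :
    read π ⟨n - 1, by omega⟩ ≠ 2 := by
  intro h
  rw [read_eq_two_iff] at h
  obtain ⟨-, h2⟩ := h
  have := (π ⟨3 * ((⟨n - 1, by omega⟩ : Fin n) : ℕ) + 2, by simp; omega⟩).2
  simp at h2 this
  omega

lemma bnd_val {π : Equiv.Perm (Fin (3 * n))} (hB : Bnd π) (m : ℕ) (hm : m < 3 * n) :
    (π ⟨m, hm⟩ : ℕ) ≤ m + 1 ∧ m ≤ (π ⟨m, hm⟩ : ℕ) + 1 := by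
  simpa using hB ⟨m, hm⟩

lemma swapback_val {π : Equiv.Perm (Fin (3 * n))} (hB : Bnd π) (m : ℕ) (h1 : m < 3 * n)
    (h2 : m + 1 < 3 * n) (h : (π ⟨m, h1⟩ : ℕ) = m + 1) : (π ⟨m + 1, h2⟩ : ℕ) = m := by
  have hs := swapback π hB ⟨m, h1⟩ (by simpa using h) (by simpa using h2)
  have e : (⟨((⟨m, h1⟩ : Fin (3 * n)) : ℕ) + 1, by simpa using h2⟩ : Fin (3 * n)) =
      ⟨m + 1, h2⟩ := Fin.ext (by simp)
  rw [e] at hs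
  simpa using hs

lemma swapfwd_val {π : Equiv.Perm (Fin (3 * n))} (hB : Bnd π) (m : ℕ) (h0 : 1 ≤ m)
    (h1 : m < 3 * n) (h : (π ⟨m, h1⟩ : ℕ) = m - 1) :
    (π ⟨m - 1, by omega⟩ : ℕ) = m := by
  have hs := swapfwd π hB ⟨m, h1⟩ (by simpa using h0) (by simpa using h)
  have e : (⟨((⟨m, h1⟩ : Fin (3 * n)) : ℕ) - 1, by omega⟩ : Fin (3 * n)) =
      ⟨m - 1, by omega⟩ := Fin.ext (by simp)
  rw [e] at hs
  simpa using hs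

lemma read_one {π : Equiv.Perm (Fin (3 * n))} (m : ℕ) (hm : m < n) :
    read π ⟨m, hm⟩ = 1 ↔ (π ⟨3 * m + 1, by omega⟩ : ℕ) = 3 * m + 2 := by
  unfold read
  split_ifs with a1 a2 <;> simp_all

lemma read_two {π : Equiv.Perm (Fin (3 * n))} (m : ℕ) (hm : m < n) :
    read π ⟨m, hm⟩ = 2 ↔ ((π ⟨3 * m + 1, by omega⟩ : ℕ) ≠ 3 * m + 2 ∧
      (π ⟨3 * m + 2, by omega⟩ : ℕ) = 3 * m + 3) := by
  unfold read
  split_ifs with a1 a2 <;> simp_all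

lemma key {π : Equiv.Perm (Fin (3 * n))} (hD : Dcond n π) (j : Fin (3 * n)) :
    (π j : ℕ) = F (ext (read π)) (j : ℕ) := by
  obtain ⟨hB, hH⟩ := hD
  obtain ⟨t, hlt⟩ := j
  simp only [Fin.val_mk]
  have hb := bnd_val hB t hlt
  have hπ := (π ⟨t, hlt⟩).2
  have inj : ∀ (a : ℕ) (ha : a < 3 * n), (π ⟨a, ha⟩ : ℕ) = (π ⟨t, hlt⟩ : ℕ) → a = t :=
    fun a ha e => by
      have := congrArg Fin.val (π.injective (Fin.ext e))
      simpa using this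
  have h3 : t % 3 = 0 ∨ t % 3 = 1 ∨ t % 3 = 2 := by omega
  rcases h3 with hr | hr | hr
  · -- r = 0
    have hF : F (ext (read π)) t =
        if 0 < t ∧ ext (read π) (t / 3 - 1) = 2 then t - 1 else t := by
      unfold F; rw [if_pos hr]
    rw [hF]
    have hne : (π ⟨t, hlt⟩ : ℕ) ≠ t + 1 := by
      intro e
      have e2 : (⟨t, hlt⟩ : Fin (3 * n)) = ⟨3 * (t / 3), by omega⟩ := Fin.ext (by simp; omega)
      rw [e2] at e
      exact hH (t / 3) (by omega) (by rw [e]; omega)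
    by_cases hc : (π ⟨t, hlt⟩ : ℕ) = t - 1 ∧ 1 ≤ t
    · obtain ⟨hc, ht1⟩ := hc
      have hq2 : t / 3 - 1 < n := by omega
      have hs := swapfwd_val hB t ht1 hlt hc
      have e2 : (⟨t - 1, by omega⟩ : Fin (3 * n)) =
          ⟨3 * (t / 3 - 1) + 2, by omega⟩ := Fin.ext (by simp; omega)
      rw [e2] at hs
      have hcond1 : (π ⟨3 * (t / 3 - 1) + 1, by omega⟩ : ℕ) ≠ 3 * (t / 3 - 1) + 2 := by
        intro e1
        have hsb := swapback_val hB (3 * (t / 3 - 1) + 1) (by omega) (by omega) e1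
        have e3 : (⟨3 * (t / 3 - 1) + 1 + 1, by omega⟩ : Fin (3 * n)) =
            ⟨3 * (t / 3 - 1) + 2, by omega⟩ := Fin.ext (by simp)
        rw [e3] at hsb
        omega
      have hread : read π ⟨t / 3 - 1, hq2⟩ = 2 :=
        (read_two (t / 3 - 1) hq2).2 ⟨hcond1, by rw [hs]; omega⟩
      have hcond : 0 < t ∧ ext (read π) (t / 3 - 1) = 2 :=
        ⟨by omega, by rw [ext_lt hq2]; exact hread⟩
      rw [if_pos hcond]
      omega
    · have hval : (π ⟨t, hlt⟩ : ℕ) = t := by omega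
      have hcond : ¬ (0 < t ∧ ext (read π) (t / 3 - 1) = 2) := by
        rintro ⟨ht0, hext⟩
        have hq2 : t / 3 - 1 < n := by omega
        rw [ext_lt hq2, read_two (t / 3 - 1) hq2] at hext
        obtain ⟨-, h2⟩ := hext
        have := inj (3 * (t / 3 - 1) + 2) (by omega) (by rw [h2, hval]; omega)
        omega
      rw [if_neg hcond]
      omega
  · -- r = 1
    have hq : t / 3 < n := by omega
    have ej : (⟨3 * (t / 3) + 1, by omega⟩ : Fin (3 * n)) = ⟨t, hlt⟩ :=
      Fin.ext (by simp; omega)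
    have hF : F (ext (read π)) t =
        if ext (read π) (t / 3) = 1 then t + 1 else t := by
      unfold F; rw [if_neg (by omega), if_pos hr]
    rw [hF, ext_lt hq]
    by_cases h1 : (π ⟨t, hlt⟩ : ℕ) = t + 1
    · have hread : read π ⟨t / 3, hq⟩ = 1 := (read_one (t / 3) hq).2 (by rw [ej, h1]; omega)
      rw [if_pos hread]
      omega
    · have h2 : (π ⟨t, hlt⟩ : ℕ) ≠ t - 1 := by
        intro e
        have hs := swapfwd_val hB t (by omega) hlt e
        have em : (⟨t - 1, by omega⟩ : Fin (3 * n)) = ⟨3 * (t / 3), by omega⟩ :=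
          Fin.ext (by simp; omega)
        rw [em] at hs
        exact hH (t / 3) (by omega) (by rw [hs]; omega)
      have h5 : read π ⟨t / 3, hq⟩ ≠ 1 := by
        intro h5
        rw [read_one (t / 3) hq, ej] at h5
        omega
      rw [if_neg h5]
      omega
  · -- r = 2
    have hq : t / 3 < n := by omega
    have ej : (⟨3 * (t / 3) + 2, by omega⟩ : Fin (3 * n)) = ⟨t, hlt⟩ :=
      Fin.ext (by simp; omega)
    have hF : F (ext (read π)) t =
        if ext (read π) (t / 3) = 1 then t - 1
        else if ext (read π) (t / 3) = 2 then t + 1 else t := by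
      unfold F; rw [if_neg (by omega), if_neg (by omega)]
    rw [hF, ext_lt hq]
    have hcond1iff : (π ⟨3 * (t / 3) + 1, by omega⟩ : ℕ) = 3 * (t / 3) + 2 →
        (π ⟨t, hlt⟩ : ℕ) = t - 1 := by
      intro e1
      have hsb := swapback_val hB (3 * (t / 3) + 1) (by omega) (by omega) e1
      have e3 : (⟨3 * (t / 3) + 1 + 1, by omega⟩ : Fin (3 * n)) = ⟨t, hlt⟩ :=
        Fin.ext (by simp; omega)
      rw [e3] at hsb
      omega
    by_cases hc1 : (π ⟨t, hlt⟩ : ℕ) = t + 1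
    · have hne1 : read π ⟨t / 3, hq⟩ ≠ 1 := by
        intro h5
        rw [read_one (t / 3) hq] at h5
        have := hcond1iff h5
        omega
      have hread : read π ⟨t / 3, hq⟩ = 2 := (read_two (t / 3) hq).2
        ⟨fun e1 => by have := hcond1iff e1; omega, by rw [ej, hc1]; omega⟩
      rw [if_neg hne1, if_pos hread]
      omega
    · by_cases hc2 : (π ⟨t, hlt⟩ : ℕ) = t - 1
      · have hs := swapfwd_val hB t (by omega) hlt hc2
        have em : (⟨t - 1, by omega⟩ : Fin (3 * n)) = ⟨3 * (t / 3) + 1, by omega⟩ :=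
          Fin.ext (by simp; omega)
        rw [em] at hs
        have hread : read π ⟨t / 3, hq⟩ = 1 := (read_one (t / 3) hq).2 (by rw [hs]; omega)
        rw [if_pos hread]
        omega
      · have hval : (π ⟨t, hlt⟩ : ℕ) = t := by omega
        have hne1 : read π ⟨t / 3, hq⟩ ≠ 1 := by
          intro h5
          rw [read_one (t / 3) hq] at h5
          have := inj (3 * (t / 3) + 1) (by omega) (by rw [h5, hval]; omega)
          omega
        have hne2 : read π ⟨t / 3, hq⟩ ≠ 2 := by
          intro h5
          rw [read_two (t / 3) hq] at h5
          obtain ⟨-, h2⟩ := h5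
          rw [ej] at h2
          omega
        rw [if_neg hne1, if_neg hne2]
        omega

lemma F_at1 (c : ℕ → Fin 3) (m : ℕ) :
    F c (3 * m + 1) = if c m = 1 then 3 * m + 2 else 3 * m + 1 := by
  unfold F
  rw [if_neg (by omega), if_pos (by omega)]
  have e : (3 * m + 1) / 3 = m := by omega
  rw [e]

lemma F_at2 (c : ℕ → Fin 3) (m : ℕ) :
    F c (3 * m + 2) = if c m = 1 then 3 * m + 1
      else if c m = 2 then 3 * m + 3 else 3 * m + 2 := by
  unfold F
  rw [if_neg (by omega), if_neg (by omega)]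
  have e : (3 * m + 2) / 3 = m := by omega
  rw [e]
  split_ifs <;> omega

lemma read_Phi (hn : 1 ≤ n) (c : Fin n → Fin 3) (hc : c ⟨n - 1, by omega⟩ ≠ 2) :
    read (Phi hn c hc) = c := by
  funext i
  obtain ⟨m, hm⟩ := i
  unfold read
  simp only [Fin.val_mk, Phi_apply]
  simp only [F_at1, F_at2, ext_lt hm]
  rcases fin3 (c ⟨m, hm⟩) with h | h | h <;> rw [h] <;> split_ifs <;> simp_all <;> omega

end Shrub5

open Shrub5 in
theorem stmt_5 (n : ℕ) (hn : 1 ≤ n) :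
    Nat.card {π : Equiv.Perm (Fin (3 * n)) // InShrub n π} = 2 * 3 ^ (n - 1) := by
  classical
  have e : {π : Equiv.Perm (Fin (3 * n)) // InShrub n π} ≃
      {c : Fin n → Fin 3 // c ⟨n - 1, by omega⟩ ≠ 2} :=
    { toFun := fun x => ⟨read x.1, read_ne hn x.1⟩
      invFun := fun y => ⟨Phi hn y.1 y.2,
        inshrub_of_dcond (dcond_Phi hn y.1 y.2)⟩
      left_inv := fun x => Subtype.ext (by
        apply Equiv.ext
        intro j
        apply Fin.ext
        rw [Phi_apply]
        exact (key (dcond_of_inshrub x.2) j).symm)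
      right_inv := fun y => Subtype.ext (read_Phi hn y.1 y.2) }
  rw [Nat.card_congr e, Nat.card_eq_fintype_card]
  have e2 : {c : Fin n → Fin 3 // c ⟨n - 1, by omega⟩ ≠ 2} ≃
      {x : Fin 3 // x ≠ 2} × ({j : Fin n // j ≠ ⟨n - 1, by omega⟩} → Fin 3) :=
    ((Equiv.funSplitAt (⟨n - 1, by omega⟩ : Fin n) (Fin 3)).subtypeEquiv
        (q := fun x => x.1 ≠ 2) (fun c => Iff.rfl)).trans (Equiv.prodSubtypeFstEquivSubtypeProd (p := fun x : Fin 3 => x ≠ 2))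
  rw [Fintype.card_congr e2, Fintype.card_prod, Fintype.card_fun]
  have h1 : Fintype.card {x : Fin 3 // x ≠ 2} = 2 := by
    simp [Fintype.card_subtype_compl]
  have h2 : Fintype.card {j : Fin n // j ≠ ⟨n - 1, by omega⟩} = n - 1 := by
    simp [Fintype.card_subtype_compl]
  rw [h1, h2, Fintype.card_fin]
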